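/- Up to projective equivalence there are exactly 4 caps of size 7 in PG(5,2) that span V: the four caps each consisting of the six standard basis vectors e1, …, e6 of V = (Fin 6 → ZMod 2) together with, respectively, the vector (1,1,1,1,1,1), the vector (1,0,0,0,1,1), the vector (1,1,0,1,1,0), and the vector (1,1,1,0,1,1), are pairwise projectively inequivalent caps, and every 7-cap whose elements span V is projectively equivalent to one of these four. -/

import Mathlib

/-- The ambient 6-dimensional vector space over GF(2). -/
abbrev V : Type := Fin 6 → ZMod 2

/-- A cap in PG(5,2): a finite set of nonzero vectors of `V` no three pairwise
distinct elements of which sum to `0`. -/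
def IsCap (S : Set V) : Prop :=
  S.Finite ∧ (∀ v ∈ S, v ≠ 0) ∧
    ∀ a ∈ S, ∀ b ∈ S, ∀ c ∈ S, a ≠ b → a ≠ c → b ≠ c → a + b + c ≠ 0

/-- A cap is complete if it cannot be extended by any nonzero vector. -/
def IsCompleteCap (S : Set V) : Prop :=
  IsCap S ∧ ∀ v : V, v ≠ 0 → v ∉ S → ¬ IsCap (insert v S)

/-- Projective equivalence of caps: some linear automorphism of `V` maps one onto the other. -/
def ProjEquiv (S T : Set V) : Prop :=
  ∃ A : V ≃ₗ[ZMod 2] V, ⇑A '' S = T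

/-- The `i`-th standard basis vector of `V`. -/
def e (i : Fin 6) : V := Pi.single i 1
/-- The 7-cap consisting of the six standard basis vectors together with `w`. -/
def cap7 (w : V) : Set V := {e 0, e 1, e 2, e 3, e 4, e 5, w}

set_option maxRecDepth 40000

section Aux

lemma zmod2_cases : ∀ x : ZMod 2, x = 0 ∨ x = 1 := by decide

lemma vadd_self (v : V) : v + v = 0 := by
  funext i
  show v i + v i = 0
  rcases zmod2_cases (v i) with h | h <;> rw [h] <;> decide

def Fcap7 (w : V) : Finset V := {e 0, e 1, e 2, e 3, e 4, e 5, w}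

lemma cap7_coe (w : V) : cap7 w = ↑(Fcap7 w) := by
  simp [cap7, Fcap7]

lemma cap7_eq_insert (w : V) : cap7 w = insert w (Set.range e) := by
  ext v
  simp only [cap7, Set.mem_insert_iff, Set.mem_singleton_iff, Set.mem_range]
  constructor
  · rintro (rfl | rfl | rfl | rfl | rfl | rfl | rfl)
    · exact Or.inr ⟨0, rfl⟩
    · exact Or.inr ⟨1, rfl⟩
    · exact Or.inr ⟨2, rfl⟩
    · exact Or.inr ⟨3, rfl⟩
    · exact Or.inr ⟨4, rfl⟩
    · exact Or.inr ⟨5, rfl⟩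
    · exact Or.inl rfl
  · rintro (rfl | ⟨i, rfl⟩)
    · tauto
    · fin_cases i <;> tauto

lemma mem_cap7_e (i : Fin 6) (w : V) : e i ∈ cap7 w := by
  rw [cap7_eq_insert]; exact Set.mem_insert_of_mem _ ⟨i, rfl⟩

lemma mem_cap7_w (w : V) : w ∈ cap7 w := by
  rw [cap7_eq_insert]; exact Set.mem_insert _ _

lemma isCap_finset (F : Finset V) (h1 : ∀ v ∈ F, v ≠ 0)
    (h2 : ∀ a ∈ F, ∀ b ∈ F, ∀ c ∈ F, a ≠ b → a ≠ c → b ≠ c → a + b + c ≠ 0) :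
    IsCap ↑F :=
  ⟨F.finite_toSet, fun v hv => h1 v (by simpa using hv),
   fun a ha b hb c hc => h2 a (by simpa using ha) b (by simpa using hb) c (by simpa using hc)⟩

lemma isCap_image {S : Set V} (h : IsCap S) (A : V ≃ₗ[ZMod 2] V) : IsCap (⇑A '' S) := by
  obtain ⟨hfin, hnz, htri⟩ := h
  refine ⟨hfin.image _, ?_, ?_⟩
  · rintro v ⟨x, hx, rfl⟩ h0
    exact hnz x hx (by simpa using A.map_eq_zero_iff.mp h0)
  · rintro a ⟨x, hx, rfl⟩ b ⟨y, hy, rfl⟩ c ⟨z, hz, rfl⟩ hab hac hbc hsum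
    refine htri x hx y hy z hz (fun h => hab (by rw [h])) (fun h => hac (by rw [h]))
      (fun h => hbc (by rw [h])) ?_
    apply A.map_eq_zero_iff.mp
    simpa [map_add] using hsum

lemma projEquiv_symm {S T : Set V} (h : ProjEquiv S T) : ProjEquiv T S := by
  obtain ⟨A, rfl⟩ := h
  exact ⟨A.symm, by rw [← Set.image_comp]; simp⟩

def sum4 (S : Set V) : Prop :=
  ∃ a ∈ S, ∃ b ∈ S, ∃ c ∈ S, ∃ d ∈ S,
    (a ≠ b ∧ a ≠ c ∧ a ≠ d ∧ b ≠ c ∧ b ≠ d ∧ c ≠ d) ∧ a + b + c + d = 0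

def sum5 (S : Set V) : Prop :=
  ∃ a ∈ S, ∃ b ∈ S, ∃ c ∈ S, ∃ d ∈ S, ∃ f ∈ S,
    (a ≠ b ∧ a ≠ c ∧ a ≠ d ∧ a ≠ f ∧ b ≠ c ∧ b ≠ d ∧ b ≠ f ∧ c ≠ d ∧ c ≠ f ∧ d ≠ f) ∧
    a + b + c + d + f = 0

def sumZero (S : Set V) : Prop := ∃ F : Finset V, ↑F = S ∧ F.sum id = 0

lemma projEquiv_sum4 {S T : Set V} (h : ProjEquiv S T) (hs : sum4 S) : sum4 T := by
  obtain ⟨A, rfl⟩ := h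
  obtain ⟨a, ha, b, hb, c, hc, d, hd, ⟨h1, h2, h3, h4, h5, h6⟩, hsum⟩ := hs
  refine ⟨A a, Set.mem_image_of_mem _ ha, A b, Set.mem_image_of_mem _ hb,
    A c, Set.mem_image_of_mem _ hc, A d, Set.mem_image_of_mem _ hd,
    ⟨A.injective.ne h1, A.injective.ne h2, A.injective.ne h3, A.injective.ne h4,
     A.injective.ne h5, A.injective.ne h6⟩, ?_⟩
  have : A (a + b + c + d) = 0 := by rw [hsum, map_zero]
  simpa [map_add] using this

lemma projEquiv_sum5 {S T : Set V} (h : ProjEquiv S T) (hs : sum5 S) : sum5 T := by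
  obtain ⟨A, rfl⟩ := h
  obtain ⟨a, ha, b, hb, c, hc, d, hd, f, hf,
    ⟨h1, h2, h3, h4, h5, h6, h7, h8, h9, h10⟩, hsum⟩ := hs
  refine ⟨A a, Set.mem_image_of_mem _ ha, A b, Set.mem_image_of_mem _ hb,
    A c, Set.mem_image_of_mem _ hc, A d, Set.mem_image_of_mem _ hd,
    A f, Set.mem_image_of_mem _ hf,
    ⟨A.injective.ne h1, A.injective.ne h2, A.injective.ne h3, A.injective.ne h4,
     A.injective.ne h5, A.injective.ne h6, A.injective.ne h7, A.injective.ne h8,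
     A.injective.ne h9, A.injective.ne h10⟩, ?_⟩
  have : A (a + b + c + d + f) = 0 := by rw [hsum, map_zero]
  simpa [map_add] using this

lemma projEquiv_sumZero {S T : Set V} (h : ProjEquiv S T) (hs : sumZero S) : sumZero T := by
  obtain ⟨A, rfl⟩ := h
  obtain ⟨F, hF, hsum⟩ := hs
  refine ⟨F.image ⇑A, by rw [Finset.coe_image, hF], ?_⟩
  rw [Finset.sum_image (fun x _ y _ h => A.injective h)]
  simp only [id]
  rw [← map_sum]
  rw [show (∑ x ∈ F, x) = F.sum id from rfl, hsum, map_zero]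

lemma sum4_coe (F : Finset V) :
    sum4 ↑F ↔ ∃ a ∈ F, ∃ b ∈ F, ∃ c ∈ F, ∃ d ∈ F,
      (a ≠ b ∧ a ≠ c ∧ a ≠ d ∧ b ≠ c ∧ b ≠ d ∧ c ≠ d) ∧ a + b + c + d = 0 := by
  simp [sum4]

lemma sum5_coe (F : Finset V) :
    sum5 ↑F ↔ ∃ a ∈ F, ∃ b ∈ F, ∃ c ∈ F, ∃ d ∈ F, ∃ f ∈ F,
      (a ≠ b ∧ a ≠ c ∧ a ≠ d ∧ a ≠ f ∧ b ≠ c ∧ b ≠ d ∧ b ≠ f ∧ c ≠ d ∧ c ≠ f ∧ d ≠ f) ∧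
      a + b + c + d + f = 0 := by
  simp [sum5]


lemma capA : IsCap (cap7 ![1,1,1,1,1,1]) := by
  rw [cap7_coe]; exact isCap_finset _ (by decide) (by decide)
lemma capB : IsCap (cap7 ![1,0,0,0,1,1]) := by
  rw [cap7_coe]; exact isCap_finset _ (by decide) (by decide)
lemma capC : IsCap (cap7 ![1,1,0,1,1,0]) := by
  rw [cap7_coe]; exact isCap_finset _ (by decide) (by decide)
lemma capD : IsCap (cap7 ![1,1,1,0,1,1]) := by
  rw [cap7_coe]; exact isCap_finset _ (by decide) (by decide)

lemma sz6 : sumZero (cap7 ![1,1,1,1,1,1]) :=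
  ⟨Fcap7 _, (cap7_coe _).symm, by decide⟩
lemma nz3 : ¬ sumZero (cap7 ![1,0,0,0,1,1]) := by
  rintro ⟨F, hF, hs⟩
  have hFe : F = Fcap7 ![1,0,0,0,1,1] := Finset.coe_injective (hF.trans (cap7_coe _))
  subst hFe; revert hs; decide
lemma nz4 : ¬ sumZero (cap7 ![1,1,0,1,1,0]) := by
  rintro ⟨F, hF, hs⟩
  have hFe : F = Fcap7 ![1,1,0,1,1,0] := Finset.coe_injective (hF.trans (cap7_coe _))
  subst hFe; revert hs; decide
lemma nz5 : ¬ sumZero (cap7 ![1,1,1,0,1,1]) := by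
  rintro ⟨F, hF, hs⟩
  have hFe : F = Fcap7 ![1,1,1,0,1,1] := Finset.coe_injective (hF.trans (cap7_coe _))
  subst hFe; revert hs; decide

lemma s4_3 : sum4 (cap7 ![1,0,0,0,1,1]) :=
  ⟨e 0, mem_cap7_e _ _, e 4, mem_cap7_e _ _, e 5, mem_cap7_e _ _,
   ![1,0,0,0,1,1], mem_cap7_w _, by refine ⟨⟨?_, ?_, ?_, ?_, ?_, ?_⟩, ?_⟩ <;> decide⟩
lemma n4_4 : ¬ sum4 (cap7 ![1,1,0,1,1,0]) := by
  rw [cap7_coe, sum4_coe]; decide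
lemma n4_5 : ¬ sum4 (cap7 ![1,1,1,0,1,1]) := by
  rw [cap7_coe, sum4_coe]; decide
lemma s5_4 : sum5 (cap7 ![1,1,0,1,1,0]) :=
  ⟨e 0, mem_cap7_e _ _, e 1, mem_cap7_e _ _, e 3, mem_cap7_e _ _, e 4, mem_cap7_e _ _,
   ![1,1,0,1,1,0], mem_cap7_w _,
   by refine ⟨⟨?_, ?_, ?_, ?_, ?_, ?_, ?_, ?_, ?_, ?_⟩, ?_⟩ <;> decide⟩
lemma n5_5 : ¬ sum5 (cap7 ![1,1,1,0,1,1]) := by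
  rw [cap7_coe, sum5_coe]
  push_neg
  decide

lemma build (w r : V) (s t : Finset (Fin 6))
    (hw : ∀ i, w i = if i ∈ s then 1 else 0)
    (hr : ∀ i, r i = if i ∈ t then 1 else 0)
    (hc : s.card = t.card) : ∃ σ : Equiv.Perm (Fin 6), ∀ i, w i = r (σ i) := by
  have hcc : (sᶜ).card = (tᶜ).card := by rw [Finset.card_compl, Finset.card_compl, hc]
  let e₁ : {x // x ∈ s} ≃ {x // x ∈ t} := Finset.equivOfCardEq hc
  let e₂' : {x // x ∈ sᶜ} ≃ {x // x ∈ tᶜ} := Finset.equivOfCardEq hcc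
  let e₂ : {x // ¬ x ∈ s} ≃ {x // ¬ x ∈ t} :=
    (Equiv.subtypeEquivRight (fun x => (Finset.mem_compl (s := s)).symm)).trans
      (e₂'.trans (Equiv.subtypeEquivRight (fun x => Finset.mem_compl (s := t))))
  refine ⟨Equiv.subtypeCongr e₁ e₂, fun i => ?_⟩
  by_cases hi : i ∈ s
  · have h1 : Equiv.subtypeCongr e₁ e₂ i = ↑(e₁ ⟨i, hi⟩) := by
      simp [Equiv.subtypeCongr, Equiv.sumCompl_symm_apply_of_pos hi]
    rw [hw, hr, h1, if_pos hi, if_pos (e₁ ⟨i, hi⟩).2]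
  · have h1 : Equiv.subtypeCongr e₁ e₂ i = ↑(e₂ ⟨i, hi⟩) := by
      simp [Equiv.subtypeCongr, Equiv.sumCompl_symm_apply_of_neg hi]
    rw [hw, hr, h1, if_neg hi, if_neg (e₂ ⟨i, hi⟩).2]

lemma exists_perm (w : V) (hw0 : w ≠ 0) (hwi : ∀ i, w ≠ e i)
    (hwij : ∀ i j, i ≠ j → w ≠ e i + e j) :
    ∃ r ∈ ({![1,1,1,1,1,1], ![1,0,0,0,1,1], ![1,1,0,1,1,0], ![1,1,1,0,1,1]} : Set V),
      ∃ σ : Equiv.Perm (Fin 6), ∀ i, w i = r (σ i) := by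
  classical
  set s : Finset (Fin 6) := Finset.univ.filter (fun i => w i = 1) with hs
  have hval : ∀ i, w i = if i ∈ s then 1 else 0 := by
    intro i
    by_cases hi : w i = 1
    · simp [hs, Finset.mem_filter, hi]
    · have h0 : w i = 0 := (zmod2_cases (w i)).resolve_right hi
      simp [hs, Finset.mem_filter, hi, h0]
  have h0 : s.card ≠ 0 := by
    intro h
    apply hw0
    funext i
    rw [hval i, Finset.card_eq_zero.mp h]
    simp
  have h1 : s.card ≠ 1 := by
    intro h
    obtain ⟨i, hi⟩ := Finset.card_eq_one.mp h
    apply hwi i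
    funext j
    rw [hval j, hi]
    simp [e, Pi.single_apply, Finset.mem_singleton]
  have h2 : s.card ≠ 2 := by
    intro h
    obtain ⟨i, j, hij, hsij⟩ := Finset.card_eq_two.mp h
    apply hwij i j hij
    funext k
    rw [hval k, hsij]
    show _ = e i k + e j k
    simp only [e, Pi.single_apply, Finset.mem_insert, Finset.mem_singleton]
    by_cases hk : k = i <;> by_cases hk' : k = j <;> simp_all
  have h6 : s.card ≤ 6 := by
    have := Finset.card_le_univ s
    simpa using this
  have hrange : s.card = 3 ∨ s.card = 4 ∨ s.card = 5 ∨ s.card = 6 := by omega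
  rcases hrange with h | h | h | h
  · refine ⟨![1,0,0,0,1,1], by simp, ?_⟩
    exact build w _ s ({0,4,5} : Finset (Fin 6)) hval (by decide) (by rw [h]; decide)
  · refine ⟨![1,1,0,1,1,0], by simp, ?_⟩
    exact build w _ s ({0,1,3,4} : Finset (Fin 6)) hval (by decide) (by rw [h]; decide)
  · refine ⟨![1,1,1,0,1,1], by simp, ?_⟩
    exact build w _ s ({0,1,2,4,5} : Finset (Fin 6)) hval (by decide) (by rw [h]; decide)
  · refine ⟨![1,1,1,1,1,1], by simp, ?_⟩
    exact build w _ s (Finset.univ : Finset (Fin 6)) hval (by decide) (by rw [h]; decide)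

lemma span_cap7 (w : V) : Submodule.span (ZMod 2) (cap7 w) = ⊤ := by
  refine le_antisymm le_top ?_
  have hsub : Set.range (Pi.basisFun (ZMod 2) (Fin 6)) ⊆ cap7 w := by
    rintro v ⟨i, rfl⟩
    rw [Pi.basisFun_apply]
    exact mem_cap7_e i w
  calc (⊤ : Submodule (ZMod 2) V) = Submodule.span (ZMod 2)
        (Set.range (Pi.basisFun (ZMod 2) (Fin 6))) := (Module.Basis.span_eq _).symm
    _ ≤ Submodule.span (ZMod 2) (cap7 w) := Submodule.span_mono hsub

lemma main3 (S : Set V) (hcap : IsCap S) (hcard : S.ncard = 7)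
    (hspan : Submodule.span (ZMod 2) S = ⊤) :
    ∃ w ∈ ({![1,1,1,1,1,1], ![1,0,0,0,1,1], ![1,1,0,1,1,0], ![1,1,1,0,1,1]} : Set V),
      ProjEquiv (cap7 w) S := by
  classical
  obtain ⟨t, hts, hspan', hli⟩ := exists_linearIndependent (ZMod 2) S
  have htfin : t.Finite := hcap.1.subset hts
  haveI : Fintype t := htfin.fintype
  have hB : ⊤ ≤ Submodule.span (ZMod 2) (Set.range ((↑) : t → V)) := by
    rw [Subtype.range_coe, hspan', hspan]
  let B : Module.Basis t (ZMod 2) V := Module.Basis.mk hli hB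
  have hfr : Module.finrank (ZMod 2) V = 6 := by
    rw [Module.finrank_pi]
    simp
  have hcardt : Fintype.card t = 6 := by
    have h1 := Module.finrank_eq_card_basis B
    omega
  let ι : t ≃ Fin 6 := Fintype.equivFinOfCardEq hcardt
  let A : V ≃ₗ[ZMod 2] V := B.equiv (Pi.basisFun (ZMod 2) (Fin 6)) ι
  have hA : ∀ x : t, A ↑x = e (ι x) := by
    intro x
    have hx : (x : V) = B x := (Module.Basis.mk_apply hli hB x).symm
    rw [hx, Module.Basis.equiv_apply, Pi.basisFun_apply]
    rfl
  have htn : t.ncard = 6 := by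
    rw [← Nat.card_coe_set_eq, Nat.card_eq_fintype_card, hcardt]
  have hdiff : (S \ t).ncard = 1 := by
    rw [Set.ncard_diff hts htfin, hcard, htn]
  obtain ⟨u, hu⟩ := Set.ncard_eq_one.mp hdiff
  have hut : u ∉ t := by
    have : u ∈ S \ t := by rw [hu]; exact rfl
    exact this.2
  have huS : u ∈ S := by
    have : u ∈ S \ t := by rw [hu]; exact rfl
    exact this.1
  have hS : S = insert u t := by
    rw [← Set.diff_union_of_subset hts, hu, Set.singleton_union]
  have himg : ⇑A '' t = Set.range e := by
    ext v
    constructor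
    · rintro ⟨x, hx, rfl⟩
      exact ⟨ι ⟨x, hx⟩, (hA ⟨x, hx⟩).symm⟩
    · rintro ⟨i, rfl⟩
      refine ⟨↑(ι.symm i), (ι.symm i).2, ?_⟩
      rw [hA (ι.symm i)]
      simp
  have hAS : ⇑A '' S = cap7 (A u) := by
    rw [hS, Set.image_insert_eq, himg, cap7_eq_insert]
  set w := A u with hwdef
  have hcap7 : IsCap (cap7 w) := hAS ▸ isCap_image hcap A
  have hwr : w ∉ Set.range e := by
    rintro ⟨i, hi⟩
    apply hut
    have : A u = A ↑(ι.symm i) := by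
      rw [hA (ι.symm i)]
      simpa using hi.symm
    have := A.injective this
    rw [this]
    exact (ι.symm i).2
  have hw0 : w ≠ 0 := hcap7.2.1 w (mem_cap7_w w)
  have hwi : ∀ i, w ≠ e i := fun i h => hwr ⟨i, h.symm⟩
  have hwij : ∀ i j, i ≠ j → w ≠ e i + e j := by
    intro i j hij h
    have hei : e i ≠ e j := by
      intro hh
      apply hij
      have : ∀ a b : Fin 6, e a = e b → a = b := by decide
      exact this i j hh
    refine hcap7.2.2 (e i) (mem_cap7_e i w) (e j) (mem_cap7_e j w) w (mem_cap7_w w)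
      hei (fun hh => hwi i hh.symm) (fun hh => hwi j hh.symm) ?_
    rw [h]
    exact vadd_self _
  obtain ⟨r, hr, σ, hσ⟩ := exists_perm w hw0 hwi hwij
  refine ⟨r, hr, ?_⟩
  let P : V ≃ₗ[ZMod 2] V := LinearEquiv.funCongrLeft (ZMod 2) (ZMod 2) σ
  have hPr : P r = w := by
    funext i
    exact (hσ i).symm
  have hPe : ∀ i, P (e i) = e (σ.symm i) := by
    intro i
    funext j
    show e i (σ j) = e (σ.symm i) j
    simp only [e, Pi.single_apply]
    by_cases h : σ j = i
    · rw [if_pos h, if_pos (by rw [← h]; simp)]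
    · rw [if_neg h, if_neg (fun hh => h (by rw [hh]; simp))]
  have hPrange : ⇑P '' Set.range e = Set.range e := by
    rw [← Set.range_comp]
    have : ⇑P ∘ e = e ∘ ⇑σ.symm := funext fun i => hPe i
    rw [this, Set.range_comp, Equiv.range_eq_univ, Set.image_univ]
  have hPcap : ⇑P '' cap7 r = cap7 w := by
    rw [cap7_eq_insert, cap7_eq_insert, Set.image_insert_eq, hPr, hPrange]
  refine ⟨P.trans A.symm, ?_⟩
  have hcomp : ⇑(P.trans A.symm) = ⇑A.symm ∘ ⇑P := rfl
  rw [hcomp, Set.image_comp, hPcap, ← hAS, ← Set.image_comp]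
  simp

end Aux

theorem seven_caps_classification :
    (∀ w ∈ ({![1,1,1,1,1,1], ![1,0,0,0,1,1], ![1,1,0,1,1,0], ![1,1,1,0,1,1]} : Set V),
      IsCap (cap7 w) ∧ Submodule.span (ZMod 2) (cap7 w) = ⊤) ∧
    (∀ w ∈ ({![1,1,1,1,1,1], ![1,0,0,0,1,1], ![1,1,0,1,1,0], ![1,1,1,0,1,1]} : Set V),
      ∀ w' ∈ ({![1,1,1,1,1,1], ![1,0,0,0,1,1], ![1,1,0,1,1,0], ![1,1,1,0,1,1]} : Set V),
      w ≠ w' → ¬ ProjEquiv (cap7 w) (cap7 w')) ∧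
    (∀ S : Set V, IsCap S → S.ncard = 7 → Submodule.span (ZMod 2) S = ⊤ →
      ∃ w ∈ ({![1,1,1,1,1,1], ![1,0,0,0,1,1], ![1,1,0,1,1,0], ![1,1,1,0,1,1]} : Set V),
        ProjEquiv (cap7 w) S) := by
  refine ⟨?_, ?_, ?_⟩
  · intro w hw
    refine ⟨?_, span_cap7 w⟩
    simp only [Set.mem_insert_iff, Set.mem_singleton_iff] at hw
    rcases hw with rfl | rfl | rfl | rfl
    exacts [capA, capB, capC, capD]
  · intro w hw w' hw' hne hPE
    simp only [Set.mem_insert_iff, Set.mem_singleton_iff] at hw hw'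
    rcases hw with rfl | rfl | rfl | rfl <;> rcases hw' with rfl | rfl | rfl | rfl
    · exact hne rfl
    · exact nz3 (projEquiv_sumZero hPE sz6)
    · exact nz4 (projEquiv_sumZero hPE sz6)
    · exact nz5 (projEquiv_sumZero hPE sz6)
    · exact nz3 (projEquiv_sumZero (projEquiv_symm hPE) sz6)
    · exact hne rfl
    · exact n4_4 (projEquiv_sum4 hPE s4_3)
    · exact n4_5 (projEquiv_sum4 hPE s4_3)
    · exact nz4 (projEquiv_sumZero (projEquiv_symm hPE) sz6)
    · exact n4_4 (projEquiv_sum4 (projEquiv_symm hPE) s4_3)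
    · exact hne rfl
    · exact n5_5 (projEquiv_sum5 hPE s5_4)
    · exact nz5 (projEquiv_sumZero (projEquiv_symm hPE) sz6)
    · exact n4_5 (projEquiv_sum4 (projEquiv_symm hPE) s4_3)
    · exact n5_5 (projEquiv_sum5 (projEquiv_symm hPE) s5_4)
    · exact hne rfl
  · exact main3
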